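/- arXiv:1811.11911 — 2 statements merged into one kernel-verified Lean document; each statement's English description precedes it below -/
import Mathlib

section
/- Soundness of the step-indexed refinement relation: if for every step index z we have nrefines_ z s0 impl, where get_spec s0 = spec and get_ns s0 is the initial network state (all connections CLOSED), then impl network-refines spec, i.e., every network trace in impl_behavior impl also lies in spec_behavior spec. -/
/-! ## Interaction trees -/

/-- Node shapes of an interaction tree over event signature `E` with result type `R`. -/
inductive ITreeShape (E : Type → Type) (R : Type) : Type 1
  | ret (r : R) : ITreeShape E R
  | tau : ITreeShape E R
  | vis (X : Type) (e : E X) : ITreeShape E R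

/-- The polynomial functor whose final coalgebra is the type of interaction trees. -/
def ITreeF (E : Type → Type) (R : Type) : PFunctor.{1, 1} :=
  ⟨ITreeShape E R, fun s =>
    match s with
    | .ret _ => PEmpty
    | .tau => PUnit
    | .vis X _ => ULift X⟩

/-- Interaction trees: the coinductive type with constructors `Ret`, `Tau` and `Vis`,
realized as the M-type (final coalgebra) of `ITreeF E R`. -/
def ITree (E : Type → Type) (R : Type) : Type 1 :=
  (ITreeF E R).M

namespace ITree

variable {E : Type → Type} {A B R S : Type}

/-- `Ret r`: the computation that halts returning `r`. -/
def ret (r : R) : ITree E R :=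
  PFunctor.M.mk ⟨ITreeShape.ret r, fun x => PEmpty.elim x⟩

/-- `Tau t`: a silent internal step followed by `t`. -/
def tau (t : ITree E R) : ITree E R :=
  PFunctor.M.mk ⟨ITreeShape.tau, fun _ => t⟩

/-- `Vis e k`: a visible event `e` awaiting an answer `x : X`, continuing as `k x`. -/
def vis {X : Type} (e : E X) (k : X → ITree E R) : ITree E R :=
  PFunctor.M.mk ⟨ITreeShape.vis X e, fun x => k x.down⟩

/-- Monadic bind: corecursively grafts `k r` at each leaf `Ret r`. -/
def bind (t : ITree E A) (k : A → ITree E R) : ITree E R :=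
  PFunctor.M.corec
    (fun s =>
      match s with
      | Sum.inl t' =>
        match PFunctor.M.dest t' with
        | ⟨ITreeShape.ret a, _⟩ =>
          match PFunctor.M.dest (k a) with
          | ⟨sh, ch⟩ => ⟨sh, fun b => Sum.inr (ch b)⟩
        | ⟨ITreeShape.tau, ch⟩ => ⟨ITreeShape.tau, fun b => Sum.inl (ch b)⟩
        | ⟨ITreeShape.vis X e, ch⟩ => ⟨ITreeShape.vis X e, fun b => Sum.inl (ch b)⟩
      | Sum.inr u =>
        match PFunctor.M.dest u with
        | ⟨sh, ch⟩ => ⟨sh, fun b => Sum.inr (ch b)⟩)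
    (Sum.inl t : ITree E A ⊕ ITree E R)

instance : Monad (ITree E) where
  pure := ret
  bind := bind

/-- Perform a single event and return its answer. -/
def trigger {X : Type} (e : E X) : ITree E X :=
  vis e ret

/-- The silently diverging tree: `spin = Tau spin`. -/
def spin : ITree E R :=
  PFunctor.M.corec (fun _ : PUnit.{2} => ⟨ITreeShape.tau, fun _ => PUnit.unit⟩) PUnit.unit

/-- Iterate a body `step` forever (a `CoFixpoint` loop threading a state `s : S`). -/
def loop (step : S → ITree E S) (s₀ : S) : ITree E Unit :=
  PFunctor.M.corec
    (fun t : ITree E S =>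
      match PFunctor.M.dest t with
      | ⟨ITreeShape.ret s, _⟩ => ⟨ITreeShape.tau, fun _ => step s⟩
      | ⟨ITreeShape.tau, ch⟩ => ⟨ITreeShape.tau, fun b => ch b⟩
      | ⟨ITreeShape.vis X e, ch⟩ => ⟨ITreeShape.vis X e, fun b => ch b⟩)
    (step s₀)

/-! ## Equivalence up to Tau (weak bisimulation) -/

/-- `Untaus t u`: `u` is obtained from `t` by removing finitely many leading `Tau`
nodes, and `u` does not itself start with a `Tau`. -/
inductive Untaus : ITree E R → ITree E R → Prop
  | base {t : ITree E R} (h : ∀ t', t ≠ tau t') : Untaus t t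
  | step {t u : ITree E R} (h : Untaus t u) : Untaus (tau t) u

/-- `t` converges to a non-`Tau` node after finitely many leading `Tau`s. -/
def FiniteTaus (t : ITree E R) : Prop := ∃ t', Untaus t t'

/-- Two trees with no leading `Tau` match up to `Rel`: both are the same `Ret`,
or both are `Vis` of the same event with continuations pointwise related by `Rel`. -/
def EqHead (Rel : ITree E R → ITree E R → Prop) (t u : ITree E R) : Prop :=
  (∃ r : R, t = ret r ∧ u = ret r) ∨
  (∃ (X : Type) (e : E X) (k k' : X → ITree E R),
      t = vis e k ∧ u = vis e k' ∧ ∀ x : X, Rel (k x) (k' x))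

/-- `Rel` is a weak bisimulation. -/
def IsEuttRel (Rel : ITree E R → ITree E R → Prop) : Prop :=
  ∀ t u, Rel t u →
    (FiniteTaus t ↔ FiniteTaus u) ∧
    (∀ t' u', Untaus t t' → Untaus u u' → EqHead Rel t' u')

/-- Equivalence up to `Tau`: the greatest weak bisimulation. -/
def Eutt (t u : ITree E R) : Prop :=
  ∃ Rel, IsEuttRel Rel ∧ Rel t u

/-! ## Traces -/

/-- An event together with the environment's answer. -/
structure EventE (E : Type → Type) : Type 1 where
  X : Type
  e : E X
  ans : X

/-- `IsTrace t tr r?` holds when `tr` lists, in order, the `Vis` events (with answers)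
along a finite `Tau`-skipping path of `t`, with `r? = some r` if the path ends at
`Ret r` and `none` otherwise. -/
inductive IsTrace : ITree E R → List (EventE E) → Option R → Prop
  | nil (t : ITree E R) : IsTrace t [] none
  | retEnd (r : R) : IsTrace (ITree.ret r) [] (some r)
  | tauStep {t : ITree E R} {tr r?} : IsTrace t tr r? → IsTrace (ITree.tau t) tr r?
  | visStep {X : Type} (e : E X) (x : X) {k : X → ITree E R} {tr r?} :
      IsTrace (k x) tr r? → IsTrace (ITree.vis e k) (⟨X, e, x⟩ :: tr) r?

/-- Trace refinement: every trace of `t` (with its optional result) is a trace of `u`. -/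
def Refines (t u : ITree E R) : Prop :=
  ∀ tr r?, IsTrace t tr r? → IsTrace u tr r?

end ITree
/-! ## The swap server and its network model -/

/-- Connection identifiers. -/
abbrev ConnectionId := ℕ

/-- Bytes. -/
abbrev Byte := UInt8

/-- The fixed size of swap messages. -/
def msgLen : ℕ := 1024

/-- Fixed-size messages. -/
def Message : Type := { l : List Byte // l.length = msgLen }

/-- The all-zeros message (the server's initial stored message). -/
def zeros : Message := ⟨List.replicate msgLen 0, by simp⟩

/-- Events observable over the network. -/
inductive NetworkEvent : Type
  | NewConnection (c : ConnectionId)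
  | ToServer (c : ConnectionId) (b : Byte)
  | FromServer (c : ConnectionId) (b : Byte)

/-- Network traces. -/
abbrev NetworkTrace := List NetworkEvent

/-- Status of a connection in the network. -/
inductive ConnectionStatus : Type
  | CLOSED
  | PENDING
  | ACCEPTED
  deriving DecidableEq

/-- Per-connection network state: a status and two FIFO buffers of in-flight bytes. -/
structure ConnectionNetState : Type where
  status : ConnectionStatus
  /-- bytes in flight from the client to the server -/
  toServer : List Byte
  /-- bytes in flight from the server to the client -/
  fromServer : List Byte

/-- A network state assigns to each connection a status and in-flight buffers. -/
def NetworkState : Type := ConnectionId → ConnectionNetState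

/-- The initial network state: all connections `CLOSED` with empty buffers. -/
def initial_ns : NetworkState := fun _ => ⟨ConnectionStatus.CLOSED, [], []⟩

/-- Update the state of one connection. -/
def updateNs (ns : NetworkState) (c : ConnectionId) (cs : ConnectionNetState) : NetworkState :=
  fun c' => if c' = c then cs else ns c'

/-- Labeled transitions of the network performed by the server:
accepting a pending connection, receiving from the head of the incoming buffer
(possible while `PENDING` or `ACCEPTED`), or emitting a byte (only on an
`ACCEPTED` connection, appended to the outgoing buffer). -/
def server_transition (ev : NetworkEvent) (ns ns' : NetworkState) : Prop :=
  match ev with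
  | NetworkEvent.NewConnection c =>
      (ns c).status = ConnectionStatus.PENDING ∧
      ns' = updateNs ns c { ns c with status := ConnectionStatus.ACCEPTED }
  | NetworkEvent.ToServer c b =>
      ((ns c).status = ConnectionStatus.PENDING ∨ (ns c).status = ConnectionStatus.ACCEPTED) ∧
      ∃ rest, (ns c).toServer = b :: rest ∧
        ns' = updateNs ns c { ns c with toServer := rest }
  | NetworkEvent.FromServer c b =>
      (ns c).status = ConnectionStatus.ACCEPTED ∧
      ns' = updateNs ns c { ns c with fromServer := (ns c).fromServer ++ [b] }

/-- Labeled transitions of the network performed by clients: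
opening a closed connection (making it `PENDING`), sending a byte
(appended to the incoming buffer), or receiving a byte from the head of the
outgoing buffer. -/
def client_transition (ev : NetworkEvent) (ns ns' : NetworkState) : Prop :=
  match ev with
  | NetworkEvent.NewConnection c =>
      (ns c).status = ConnectionStatus.CLOSED ∧
      ns' = updateNs ns c { ns c with status := ConnectionStatus.PENDING }
  | NetworkEvent.ToServer c b =>
      ((ns c).status = ConnectionStatus.PENDING ∨ (ns c).status = ConnectionStatus.ACCEPTED) ∧
      ns' = updateNs ns c { ns c with toServer := (ns c).toServer ++ [b] }
  | NetworkEvent.FromServer c b =>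
      (ns c).status = ConnectionStatus.ACCEPTED ∧
      ∃ rest, (ns c).fromServer = b :: rest ∧
        ns' = updateNs ns c { ns c with fromServer := rest }

/-- `network_reordered_ ns ts tc` holds iff, starting from state `ns`, there is an
interleaved execution of the network consisting of server transitions labeled, in
order, by `ts` and client transitions labeled, in order, by `tc`. -/
inductive network_reordered_ : NetworkState → NetworkTrace → NetworkTrace → Prop
  | nil (ns : NetworkState) : network_reordered_ ns [] []
  | server {ns ns' : NetworkState} {ev : NetworkEvent} {ts tc : NetworkTrace} :
      server_transition ev ns ns' → network_reordered_ ns' ts tc →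
      network_reordered_ ns (ev :: ts) tc
  | client {ns ns' : NetworkState} {ev : NetworkEvent} {ts tc : NetworkTrace} :
      client_transition ev ns ns' → network_reordered_ ns' ts tc →
      network_reordered_ ns ts (ev :: tc)

/-- Reordering by the network, starting from the initial (all-`CLOSED`) state. -/
def network_reordered (ts tc : NetworkTrace) : Prop :=
  network_reordered_ initial_ns ts tc

/-- The server side takes the sequence of steps labeled by `tr` from `ns` to `ns'`. -/
inductive server_transitions : NetworkTrace → NetworkState → NetworkState → Prop
  | nil (ns : NetworkState) : server_transitions [] ns ns
  | cons {ev : NetworkEvent} {tr : NetworkTrace} {ns ns' ns'' : NetworkState} :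
      server_transition ev ns ns' → server_transitions tr ns' ns'' →
      server_transitions (ev :: tr) ns ns''

/-! ### The linear specification -/

/-- Events of the linear specification: observing a new connection, a complete
message sent to the server, a complete message sent back by the server, and
(binary) nondeterministic choice. -/
inductive SpecE : Type → Type
  | obs_connect : SpecE ConnectionId
  | obs_msg_to_server (c : ConnectionId) : SpecE Message
  | obs_msg_from_server (c : ConnectionId) (msg : Message) : SpecE Unit
  | or : SpecE Bool

/-- Binary nondeterministic choice for specification trees. -/
def specOr {A : Type} (t u : ITree SpecE A) : ITree SpecE A :=
  ITree.vis SpecE.or (fun b => if b then t else u)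

/-- Nondeterministically choose an element of a list (built from binary choice). -/
def specChoose {A : Type} : List A → ITree SpecE A
  | [] => ITree.spin
  | x :: xs => specOr (ITree.ret x) (specChoose xs)

/-- One step of the linear specification: either accept a new connection, or pick
an open connection, receive a message on it, send back the last stored message,
and store the received one. -/
def specStep : List ConnectionId × Message → ITree SpecE (List ConnectionId × Message) :=
  fun st =>
    let conns := st.1
    let last_msg := st.2
    specOr
      (ITree.bind (ITree.trigger SpecE.obs_connect) fun c =>
        ITree.ret (c :: conns, last_msg))
      (ITree.bind (specChoose conns) fun c =>
        ITree.bind (ITree.trigger (SpecE.obs_msg_to_server c)) fun msg =>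
          ITree.bind (ITree.trigger (SpecE.obs_msg_from_server c last_msg)) fun _ =>
            ITree.ret (conns, msg))

/-- The linear specification, parameterized by the open connections and last message. -/
def linear_spec' (conns : List ConnectionId) (last_msg : Message) : ITree SpecE Unit :=
  ITree.loop specStep (conns, last_msg)

/-- The linear specification of the swap server. -/
def linear_spec : ITree SpecE Unit := linear_spec' [] zeros

/-! ### The implementation model -/

/-- Events of the implementation model: accepting a connection (possibly failing),
receiving a byte on a connection, sending a byte on a connection, and (binary)
nondeterministic choice. -/
inductive ImplE : Type → Type
  | accept : ImplE (Option ConnectionId)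
  | recv_byte (c : ConnectionId) : ImplE Byte
  | send_byte (c : ConnectionId) (b : Byte) : ImplE Unit
  | or : ImplE Bool

/-- Binary nondeterministic choice for implementation trees. -/
def implOr {A : Type} (t u : ITree ImplE A) : ITree ImplE A :=
  ITree.vis ImplE.or (fun b => if b then t else u)

/-- Nondeterministically choose an element of a list (built from binary choice). -/
def implChoose {A : Type} : List A → ITree ImplE A
  | [] => ITree.spin
  | x :: xs => implOr (ITree.ret x) (implChoose xs)

/-- Receive one byte on connection `c`. -/
def recv_byte (c : ConnectionId) : ITree ImplE Byte :=
  ITree.trigger (ImplE.recv_byte c)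

/-- Receive exactly `n` bytes on connection `c`. -/
def recv_bytes (c : ConnectionId) : ℕ → ITree ImplE (List Byte)
  | 0 => ITree.ret []
  | n + 1 =>
      ITree.bind (recv_byte c) fun b =>
        ITree.bind (recv_bytes c n) fun bs => ITree.ret (b :: bs)

/-- Send the bytes `bs` on connection `c`. -/
def send_bytes (c : ConnectionId) : List Byte → ITree ImplE Unit
  | [] => ITree.ret ()
  | b :: bs => ITree.bind (ITree.trigger (ImplE.send_byte c b)) fun _ => send_bytes c bs

/-- Per-connection state machine states of the server. -/
inductive ConnState : Type
  | RECVING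
  | SENDING
  | DELETED
  deriving DecidableEq

/-- A connection structure of the server: an id, a state, and receive/send buffers. -/
structure Connection : Type where
  conn_id : ConnectionId
  state : ConnState
  recvBuf : List Byte
  sendBuf : List Byte

/-- Whether a connection structure is in state `st`. -/
def has_conn_state (st : ConnState) (c : Connection) : Bool :=
  decide (c.state = st)

/-- Replace, in `l`, every element satisfying `p` by `c'`. -/
def replace_when (p : Connection → Bool) (c' : Connection) (l : List Connection) :
    List Connection :=
  l.map fun x => if p x then c' else x

/-- Service one connection: a `RECVING` connection receives some bytes into its
buffer and, upon completing a fixed-size message, swaps it with the stored message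
and moves to `SENDING`; a `SENDING` connection sends some prefix of its send
buffer, reverting to `RECVING` once the buffer is empty. -/
def process_conn (c : Connection) (last_full_msg : Message) :
    ITree ImplE (Connection × Message) :=
  match c.state with
  | ConnState.RECVING =>
      ITree.bind (implChoose (List.range (msgLen - c.recvBuf.length + 1))) fun n =>
        ITree.bind (recv_bytes c.conn_id n) fun bs =>
          let buf' := c.recvBuf ++ bs
          if h : buf'.length = msgLen then
            ITree.ret
              ({ c with state := ConnState.SENDING, recvBuf := [],
                        sendBuf := last_full_msg.1 },
               ⟨buf', h⟩)
          else
            ITree.ret ({ c with recvBuf := buf' }, last_full_msg)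
  | ConnState.SENDING =>
      ITree.bind (implChoose (List.range (c.sendBuf.length + 1))) fun n =>
        ITree.bind (send_bytes c.conn_id (c.sendBuf.take n)) fun _ =>
          let rest := c.sendBuf.drop n
          if rest.isEmpty then
            ITree.ret ({ c with state := ConnState.RECVING, sendBuf := [] }, last_full_msg)
          else
            ITree.ret ({ c with sendBuf := rest }, last_full_msg)
  | ConnState.DELETED => ITree.ret (c, last_full_msg)

/-- Accept a new connection (the environment may refuse). -/
def accept_connection : ITree ImplE (Option Connection) :=
  ITree.bind (ITree.trigger ImplE.accept) fun r =>
    match r with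
    | some cid => ITree.ret (some ⟨cid, ConnState.RECVING, [], []⟩)
    | none => ITree.ret none

/-- Body of the main loop of the implementation model: either accept a new
connection, or choose a `RECVING` or `SENDING` connection and service it. -/
def select_loop_body (server_st : List Connection × Message) :
    ITree ImplE (List Connection × Message) :=
  let conns := server_st.1
  let last_full_msg := server_st.2
  implOr
    (ITree.bind accept_connection fun r =>
      match r with
      | some c => ITree.ret (c :: conns, last_full_msg)
      | none => ITree.ret (conns, last_full_msg))
    (ITree.bind
      (implChoose
        (conns.filter (has_conn_state ConnState.RECVING) ++
         conns.filter (has_conn_state ConnState.SENDING))) fun c =>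
      ITree.bind (process_conn c last_full_msg) fun new_st =>
        let c' := new_st.1
        let last_full_msg' := new_st.2
        let conns' :=
          replace_when
            (fun x =>
              if has_conn_state ConnState.RECVING x || has_conn_state ConnState.SENDING x
              then decide (x.conn_id = c'.conn_id)
              else false)
            c' conns
        ITree.ret (conns', last_full_msg'))

/-- The implementation model: iterate `select_loop_body` forever from the empty
connection list and the all-zeros stored message. -/
def impl_model : ITree ImplE Unit :=
  ITree.loop select_loop_body ([], zeros)

/-! ### Converting ITree traces to network traces -/

/-- The evident conversion of specification events (with answers) to network events. -/
def specEventToNet : ITree.EventE SpecE → List NetworkEvent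
  | ⟨_, SpecE.obs_connect, c⟩ => [NetworkEvent.NewConnection c]
  | ⟨_, SpecE.obs_msg_to_server c, msg⟩ => msg.1.map (NetworkEvent.ToServer c)
  | ⟨_, SpecE.obs_msg_from_server c msg, _⟩ => msg.1.map (NetworkEvent.FromServer c)
  | ⟨_, SpecE.or, _⟩ => []

/-- The evident conversion of implementation events (with answers) to network events. -/
def implEventToNet : ITree.EventE ImplE → List NetworkEvent
  | ⟨_, ImplE.accept, some c⟩ => [NetworkEvent.NewConnection c]
  | ⟨_, ImplE.accept, none⟩ => []
  | ⟨_, ImplE.recv_byte c, b⟩ => [NetworkEvent.ToServer c b]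
  | ⟨_, ImplE.send_byte c b, _⟩ => [NetworkEvent.FromServer c b]
  | ⟨_, ImplE.or, _⟩ => []

/-- `tr` is a network trace of the specification tree `spec`. -/
def is_spec_trace (spec : ITree SpecE Unit) (tr : NetworkTrace) : Prop :=
  ∃ (etr : List (ITree.EventE SpecE)) (r? : Option Unit),
    ITree.IsTrace spec etr r? ∧ tr = (etr.map specEventToNet).flatten

/-- `tr` is a network trace of the implementation tree `impl`. -/
def is_impl_trace (impl : ITree ImplE Unit) (tr : NetworkTrace) : Prop :=
  ∃ (etr : List (ITree.EventE ImplE)) (r? : Option Unit),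
    ITree.IsTrace impl etr r? ∧ tr = (etr.map implEventToNet).flatten

/-! ### The step-indexed refinement relation -/

/-- The reasoning state: the current network state, the remaining specification
tree, and bookkeeping of the bytes received so far on each connection. -/
structure SState : Type 1 where
  get_ns : NetworkState
  get_spec : ITree SpecE Unit
  get_inbytes : ConnectionId → List Byte

/-- Functional update of the network-state component. -/
def set_ns (ns : NetworkState) (s : SState) : SState := { s with get_ns := ns }

/-- Functional update of the specification component. -/
def set_spec (spec : ITree SpecE Unit) (s : SState) : SState := { s with get_spec := spec }

/-- Status of connection `c` in the network-state component of `s`. -/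
def get_status (s : SState) (c : ConnectionId) : ConnectionStatus :=
  (s.get_ns c).status

/-- Append `bs` to the record of bytes received from connection `c`. -/
def append_inbytes (c : ConnectionId) (bs : List Byte) (s : SState) : SState :=
  { s with get_inbytes := fun c' => if c' = c then s.get_inbytes c' ++ bs else s.get_inbytes c' }

/-- `tr` is an implementation trace of `impl` of at most `z` observable steps,
relative to the reasoning state `s`. -/
def is_impl_trace_ (z : ℕ) (_s : SState) (impl : ITree ImplE Unit) (tr : NetworkTrace) :
    Prop :=
  is_impl_trace impl tr ∧ tr.length ≤ z

/-- The generalized (step-indexed) network-refinement relation. -/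
def nrefines_ (z : ℕ) (s : SState) (impl : ITree ImplE Unit) : Prop :=
  ∀ tr, is_impl_trace_ z s impl tr →
    ∃ dstr : NetworkTrace,
      network_reordered_ s.get_ns dstr tr ∧ is_spec_trace s.get_spec dstr

/-- Network behaviors of an implementation tree: network traces obtained by
disordering one of its server-side traces, starting from the initial state. -/
def impl_behavior (impl : ITree ImplE Unit) (tr : NetworkTrace) : Prop :=
  ∃ ts : NetworkTrace, is_impl_trace impl ts ∧ network_reordered ts tr

/-- Network behaviors of a specification tree. -/
def spec_behavior (spec : ITree SpecE Unit) (tr : NetworkTrace) : Prop :=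
  ∃ ds : NetworkTrace, is_spec_trace spec ds ∧ network_reordered ds tr

/-! ### Auxiliary composition lemmas -/

open ConnectionStatus in
/-- Allowed pairs of statuses in the two composed networks. -/
def NRPairOK : ConnectionStatus → ConnectionStatus → Prop
  | CLOSED, CLOSED => True
  | CLOSED, PENDING => True
  | PENDING, ACCEPTED => True
  | ACCEPTED, ACCEPTED => True
  | _, _ => False

/-- Per-connection invariant relating the states of two composed networks to the
composite network state. -/
def NRInvC (a b c : ConnectionNetState) : Prop :=
  c.toServer = a.toServer ++ b.toServer ∧
  c.fromServer = b.fromServer ++ a.fromServer ∧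
  c.status = (if a.status = ConnectionStatus.CLOSED then b.status else a.status) ∧
  NRPairOK a.status b.status ∧
  (b.fromServer ≠ [] → a.status = ConnectionStatus.ACCEPTED)

def NRInv (ns1 ns2 ns : NetworkState) : Prop := ∀ c, NRInvC (ns1 c) (ns2 c) (ns c)

lemma NRInv_initial : NRInv initial_ns initial_ns initial_ns := by
  intro c
  refine ⟨rfl, rfl, rfl, trivial, fun h => absurd rfl h⟩

lemma updateNs_self (ns : NetworkState) (c : ConnectionId) (cs : ConnectionNetState) :
    updateNs ns c cs c = cs := by simp [updateNs]

lemma updateNs_other (ns : NetworkState) (c c' : ConnectionId) (cs : ConnectionNetState)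
    (h : c' ≠ c) : updateNs ns c cs c' = ns c' := by simp [updateNs, h]

lemma NRInv_update {ns1 ns2 ns : NetworkState} (hI : NRInv ns1 ns2 ns) (c : ConnectionId)
    {a b d : ConnectionNetState} (h : NRInvC a b d) :
    NRInv (updateNs ns1 c a) (updateNs ns2 c b) (updateNs ns c d) := by
  intro c'
  by_cases hc : c' = c
  · subst hc; simpa [updateNs_self] using h
  · simpa [updateNs_other _ _ _ _ hc] using hI c'

lemma NRInv_update1 {ns1 ns2 ns : NetworkState} (hI : NRInv ns1 ns2 ns) (c : ConnectionId)
    {a d : ConnectionNetState} (h : NRInvC a (ns2 c) d) :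
    NRInv (updateNs ns1 c a) ns2 (updateNs ns c d) := by
  have := NRInv_update hI c (b := ns2 c) h
  intro c'
  by_cases hc : c' = c
  · subst hc; simpa [updateNs_self] using h
  · simpa [updateNs_other _ _ _ _ hc] using hI c'

lemma NRInv_update2 {ns1 ns2 ns : NetworkState} (hI : NRInv ns1 ns2 ns) (c : ConnectionId)
    {b d : ConnectionNetState} (h : NRInvC (ns1 c) b d) :
    NRInv ns1 (updateNs ns2 c b) (updateNs ns c d) := by
  intro c'
  by_cases hc : c' = c
  · subst hc; simpa [updateNs_self] using h
  · simpa [updateNs_other _ _ _ _ hc] using hI c'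

lemma NRInv_update12 {ns1 ns2 ns : NetworkState} (hI : NRInv ns1 ns2 ns) (c : ConnectionId)
    {a b : ConnectionNetState} (h : NRInvC a b (ns c)) :
    NRInv (updateNs ns1 c a) (updateNs ns2 c b) ns := by
  intro c'
  by_cases hc : c' = c
  · subst hc; simpa [updateNs_self] using h
  · simpa [updateNs_other _ _ _ _ hc] using hI c'

/-- Transfer a server step of the first network to the composite network. -/
lemma NR_server_step {ns1 ns2 ns ns1' : NetworkState} {ev : NetworkEvent}
    (hI : NRInv ns1 ns2 ns) (h : server_transition ev ns1 ns1') :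
    ∃ ns', server_transition ev ns ns' ∧ NRInv ns1' ns2 ns' := by
  cases ev with
  | NewConnection c =>
    obtain ⟨hto, hfrom, hst, hpair, hfs⟩ := hI c
    obtain ⟨hP, rfl⟩ := h
    refine ⟨updateNs ns c { ns c with status := ConnectionStatus.ACCEPTED }, ⟨?_, rfl⟩, ?_⟩
    · simp only [hst, hP]; rfl
    · refine NRInv_update1 hI c ⟨hto, hfrom, by simp, ?_, fun _ => rfl⟩
      rw [hP] at hpair
      cases hb : (ns2 c).status <;> rw [hb] at hpair <;> simp_all [NRPairOK]
  | ToServer c b =>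
    obtain ⟨hto, hfrom, hst, hpair, hfs⟩ := hI c
    obtain ⟨hP, rest, hbr, rfl⟩ := h
    have hne : (ns1 c).status ≠ ConnectionStatus.CLOSED := by
      rcases hP with h' | h' <;> simp [h']
    refine ⟨updateNs ns c { ns c with toServer := rest ++ (ns2 c).toServer },
      ⟨?_, rest ++ (ns2 c).toServer, ?_, rfl⟩, ?_⟩
    · rw [hst, if_neg hne]; exact hP
    · rw [hto, hbr]; rfl
    · exact NRInv_update1 hI c ⟨rfl, hfrom, by simpa [if_neg hne] using hst,
        by simpa using hpair, by simpa using hfs⟩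
  | FromServer c b =>
    obtain ⟨hto, hfrom, hst, hpair, hfs⟩ := hI c
    obtain ⟨hA, rfl⟩ := h
    have hne : (ns1 c).status ≠ ConnectionStatus.CLOSED := by simp [hA]
    refine ⟨updateNs ns c { ns c with fromServer := (ns c).fromServer ++ [b] }, ⟨?_, rfl⟩, ?_⟩
    · rw [hst, if_neg hne]; exact hA
    · exact NRInv_update1 hI c ⟨hto, by rw [hfrom, List.append_assoc],
        by simpa [if_neg hne] using hst, by simpa using hpair, by simp [hA]⟩

/-- Transfer a client step of the second network to the composite network. -/
lemma NR_client_step {ns1 ns2 ns ns2' : NetworkState} {ev : NetworkEvent}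
    (hI : NRInv ns1 ns2 ns) (h : client_transition ev ns2 ns2') :
    ∃ ns', client_transition ev ns ns' ∧ NRInv ns1 ns2' ns' := by
  cases ev with
  | NewConnection c =>
    obtain ⟨hto, hfrom, hst, hpair, hfs⟩ := hI c
    obtain ⟨hC, rfl⟩ := h
    have ha : (ns1 c).status = ConnectionStatus.CLOSED := by
      cases ha : (ns1 c).status <;> rw [ha, hC] at hpair <;> simp_all [NRPairOK]
    refine ⟨updateNs ns c { ns c with status := ConnectionStatus.PENDING }, ⟨?_, rfl⟩, ?_⟩
    · rw [hst, if_pos ha, hC]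
    · exact NRInv_update2 hI c ⟨hto, hfrom, by simp [ha], by simp [ha, NRPairOK],
        by simpa using hfs⟩
  | ToServer c b =>
    obtain ⟨hto, hfrom, hst, hpair, hfs⟩ := hI c
    obtain ⟨hP, rfl⟩ := h
    refine ⟨updateNs ns c { ns c with toServer := (ns c).toServer ++ [b] }, ⟨?_, rfl⟩, ?_⟩
    · rw [hst]
      by_cases ha : (ns1 c).status = ConnectionStatus.CLOSED
      · rw [if_pos ha]; exact hP
      · rw [if_neg ha]
        cases h' : (ns1 c).status <;> simp_all [NRPairOK]
    · exact NRInv_update2 hI c ⟨by rw [hto, List.append_assoc], hfrom,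
        by simpa using hst, by simpa using hpair, by simpa using hfs⟩
  | FromServer c b =>
    obtain ⟨hto, hfrom, hst, hpair, hfs⟩ := hI c
    obtain ⟨hA, rest, hbr, rfl⟩ := h
    have ha : (ns1 c).status = ConnectionStatus.ACCEPTED := by
      apply hfs; rw [hbr]; simp
    have hne : (ns1 c).status ≠ ConnectionStatus.CLOSED := by simp [ha]
    refine ⟨updateNs ns c { ns c with fromServer := rest ++ (ns1 c).fromServer },
      ⟨?_, rest ++ (ns1 c).fromServer, ?_, rfl⟩, ?_⟩
    · rw [hst, if_neg hne]; exact ha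
    · rw [hfrom, hbr]; rfl
    · exact NRInv_update2 hI c ⟨hto, rfl, by simpa [if_neg hne] using hst,
        by simpa using hpair, fun h' => ha⟩

/-- A synchronized step (client in the first network, server in the second). -/
lemma NR_sync_step {ns1 ns2 ns ns1' ns2' : NetworkState} {ev : NetworkEvent}
    (hI : NRInv ns1 ns2 ns) (h1 : client_transition ev ns1 ns1')
    (h2 : server_transition ev ns2 ns2') : NRInv ns1' ns2' ns := by
  cases ev with
  | NewConnection c =>
    obtain ⟨hto, hfrom, hst, hpair, hfs⟩ := hI c
    obtain ⟨hC, rfl⟩ := h1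
    obtain ⟨hP, rfl⟩ := h2
    have hfe : (ns2 c).fromServer = [] := by
      by_contra h'
      rw [hfs h'] at hC; exact absurd hC (by simp)
    exact NRInv_update12 hI c ⟨hto, hfrom, by simp_all, by simp [NRPairOK],
      by simp [hfe]⟩
  | ToServer c b =>
    obtain ⟨hto, hfrom, hst, hpair, hfs⟩ := hI c
    obtain ⟨hP1, rfl⟩ := h1
    obtain ⟨hP2, rest, hbr, rfl⟩ := h2
    refine NRInv_update12 hI c ⟨?_, hfrom, hst, hpair, hfs⟩
    rw [hto, hbr]; simp
  | FromServer c b =>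
    obtain ⟨hto, hfrom, hst, hpair, hfs⟩ := hI c
    obtain ⟨hA1, rest, hbr, rfl⟩ := h1
    obtain ⟨hA2, rfl⟩ := h2
    refine NRInv_update12 hI c ⟨hto, ?_, hst, hpair, by simp [hA1]⟩
    rw [hfrom, hbr]; simp

lemma NR_compose : ∀ (n : ℕ) {ds ts tr : NetworkTrace} {ns1 ns2 ns : NetworkState},
    ds.length + ts.length + tr.length ≤ n →
    network_reordered_ ns1 ds ts → network_reordered_ ns2 ts tr →
    NRInv ns1 ns2 ns → network_reordered_ ns ds tr := by
  intro n
  induction n with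
  | zero =>
    intro ds ts tr ns1 ns2 ns hlen h1 h2 hI
    have hds : ds = [] := by
      cases ds
      · rfl
      · simp_all
    have htr : tr = [] := by
      cases tr
      · rfl
      · simp_all
    subst hds; subst htr
    exact network_reordered_.nil ns
  | succ n ih =>
    intro ds ts tr ns1 ns2 ns hlen h1 h2 hI
    cases h2 with
    | nil =>
      cases h1 with
      | nil => exact network_reordered_.nil ns
      | server hs h1' =>
        obtain ⟨ns', hs', hI'⟩ := NR_server_step hI hs
        refine network_reordered_.server hs' (ih ?_ h1' (network_reordered_.nil _) hI')
        simp only [List.length_cons] at hlen ⊢; omega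
    | client hc h2' =>
      obtain ⟨ns', hc', hI'⟩ := NR_client_step hI hc
      refine network_reordered_.client hc' (ih ?_ h1 h2' hI')
      simp only [List.length_cons] at hlen ⊢; omega
    | server hs h2' =>
      cases h1 with
      | server hs1 h1' =>
        obtain ⟨ns', hs', hI'⟩ := NR_server_step hI hs1
        refine network_reordered_.server hs' (ih ?_ h1' (network_reordered_.server hs h2') hI')
        simp only [List.length_cons] at hlen ⊢; omega
      | client hc1 h1' =>
        refine ih ?_ h1' h2' (NR_sync_step hI hc1 hs)
        simp only [List.length_cons] at hlen ⊢; omega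

lemma network_reordered_trans {a b c : NetworkTrace}
    (h1 : network_reordered a b) (h2 : network_reordered b c) : network_reordered a c :=
  NR_compose (a.length + b.length + c.length) le_rfl h1 h2 NRInv_initial

/-- Soundness of the step-indexed refinement relation: if
`nrefines_ z s0 impl` holds for every step index `z`, where `s0` has
specification component `spec` and the initial network state, then `impl`
network-refines `spec`. -/
theorem nrefines_sound (impl : ITree ImplE Unit) (spec : ITree SpecE Unit) (s0 : SState)
    (hspec : s0.get_spec = spec) (hns : s0.get_ns = initial_ns)
    (h : ∀ z : ℕ, nrefines_ z s0 impl) :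
    ∀ tr : NetworkTrace, impl_behavior impl tr → spec_behavior spec tr := by
  intro tr ⟨ts, hts, hre⟩
  obtain ⟨dstr, hds, hsp⟩ := h ts.length ts ⟨hts, le_rfl⟩
  rw [hns] at hds
  rw [hspec] at hsp
  exact ⟨dstr, hsp, network_reordered_trans hds hre⟩
end

section
/- Equivalence up to Tau implies trace refinement: for any event signature E, result type R, and t, u : itree E R, if t ≡ u (t and u are weakly bisimilar, i.e., equivalent up to Tau) then t ⊑ u (every trace of t, with its optional result, is a trace of u). -/
namespace ITree

variable {E : Type → Type} {R : Type}

theorem mk_inj {a b : (ITreeF E R).Obj (ITreeF E R).M}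
    (h : PFunctor.M.mk a = PFunctor.M.mk b) : a = b := by
  have := congrArg PFunctor.M.dest h
  rwa [PFunctor.M.dest_mk, PFunctor.M.dest_mk] at this

theorem ret_ne_tau (r : R) (t : ITree E R) : (ret r : ITree E R) ≠ tau t := by
  intro h
  have := mk_inj h
  injection this with h1 h2
  cases h1

theorem ret_ne_vis {X : Type} (r : R) (e : E X) (k : X → ITree E R) :
    (ret r : ITree E R) ≠ vis e k := by
  intro h
  have := mk_inj h
  injection this with h1 h2
  cases h1

theorem vis_ne_tau {X : Type} (e : E X) (k : X → ITree E R) (t : ITree E R) :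
    (vis e k : ITree E R) ≠ tau t := by
  intro h
  have := mk_inj h
  injection this with h1 h2
  cases h1

theorem ret_inj {r r' : R} (h : (ret r : ITree E R) = ret r') : r = r' := by
  have := mk_inj h
  injection this with h1 h2
  injection h1

theorem vis_inj {X Y : Type} {e : E X} {e' : E Y} {k : X → ITree E R} {k' : Y → ITree E R}
    (h : vis e k = vis e' k') :
    ∃ hXY : X = Y, HEq e e' ∧ HEq k k' := by
  have := mk_inj h
  injection this with h1 h2
  injection h1 with hX hE
  subst hX
  refine ⟨rfl, hE, ?_⟩
  have h2' := eq_of_heq h2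
  have : k = k' := by
    funext a
    exact congrFun h2' ⟨a⟩
  exact heq_of_eq this

theorem isTrace_of_untaus {t t' : ITree E R} (h : Untaus t t') {tr : List (EventE E)}
    {r? : Option R} (ht : IsTrace t' tr r?) : IsTrace t tr r? := by
  induction h with
  | base _ => exact ht
  | step _ ih => exact .tauStep (ih ht)

theorem tau_inj {t t' : ITree E R} (h : tau t = tau t') : t = t' := by
  have := mk_inj h
  injection this with h1 h2
  exact congrFun h2 PUnit.unit

theorem untaus_tau_inv {t u : ITree E R} (h : Untaus (tau t) u) : Untaus t u := by
  generalize ht : tau t = s at h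
  cases h with
  | base hne => exact absurd ht.symm (hne t)
  | step h' => rename_i t₀; rw [tau_inj ht]; exact h'

theorem finiteTaus_tau {t : ITree E R} : FiniteTaus (tau t) ↔ FiniteTaus t := by
  constructor
  · rintro ⟨t', h⟩
    exact ⟨t', untaus_tau_inv h⟩
  · rintro ⟨t', h⟩
    exact ⟨t', .step h⟩

theorem eqHead_mono {Rel Rel' : ITree E R → ITree E R → Prop}
    (hsub : ∀ a b, Rel a b → Rel' a b) {t u : ITree E R}
    (h : EqHead Rel t u) : EqHead Rel' t u := by
  rcases h with ⟨r, h1, h2⟩ | ⟨X, e, k, k', h1, h2, h3⟩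
  · exact Or.inl ⟨r, h1, h2⟩
  · exact Or.inr ⟨X, e, k, k', h1, h2, fun x => hsub _ _ (h3 x)⟩

theorem eutt_of_eutt_tau {t u : ITree E R} (h : Eutt (tau t) u) : Eutt t u := by
  obtain ⟨Rel, hbis, hrel⟩ := h
  refine ⟨fun a b => Rel a b ∨ Rel (tau a) b, ?_, Or.inr hrel⟩
  intro a b hab
  rcases hab with hab | hab
  · obtain ⟨h1, h2⟩ := hbis _ _ hab
    exact ⟨h1, fun t' u' ht hu => eqHead_mono (fun _ _ => Or.inl) (h2 _ _ ht hu)⟩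
  · obtain ⟨h1, h2⟩ := hbis _ _ hab
    refine ⟨finiteTaus_tau.symm.trans h1, fun t' u' ht hu => ?_⟩
    exact eqHead_mono (fun _ _ => Or.inl) (h2 _ _ (.step ht) hu)

theorem key_isTrace {t : ITree E R} {tr : List (EventE E)} {r? : Option R}
    (htr : IsTrace t tr r?) : ∀ u : ITree E R, Eutt t u → IsTrace u tr r? := by
  induction htr with
  | nil t => exact fun u _ => .nil u
  | retEnd r =>
    intro u h
    obtain ⟨Rel, hbis, hrel⟩ := h
    obtain ⟨hiff, hheads⟩ := hbis _ _ hrel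
    have hret : Untaus (ret r : ITree E R) (ret r) := .base (fun t' => ret_ne_tau r t')
    obtain ⟨u', hu'⟩ := hiff.mp ⟨_, hret⟩
    have hh := hheads _ _ hret hu'
    rcases hh with ⟨r', h1, h2⟩ | ⟨X, e, k, k', h1, _, _⟩
    · have : r = r' := ret_inj h1
      subst this
      subst h2
      exact isTrace_of_untaus hu' (.retEnd r)
    · exact absurd h1 (ret_ne_vis r e k)
  | tauStep _ ih =>
    intro u h
    exact ih u (eutt_of_eutt_tau h)
  | visStep e x ht ih =>
    intro u h
    obtain ⟨Rel, hbis, hrel⟩ := h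
    obtain ⟨hiff, hheads⟩ := hbis _ _ hrel
    rename_i X k tr r?
    have hvis : Untaus (vis e k : ITree E R) (vis e k) :=
      .base (fun t' => vis_ne_tau e k t')
    obtain ⟨u', hu'⟩ := hiff.mp ⟨_, hvis⟩
    have hh := hheads _ _ hvis hu'
    rcases hh with ⟨r', h1, _⟩ | ⟨Y, e', k1, k1', h1, h2, h3⟩
    · exact absurd h1.symm (ret_ne_vis r' e k)
    · obtain ⟨hXY, hE, hK⟩ := vis_inj h1
      subst hXY
      have hE' := eq_of_heq hE
      subst hE'
      have hK' := eq_of_heq hK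
      subst hK'
      subst h2
      have : Eutt (k x) (k1' x) := ⟨Rel, hbis, h3 x⟩
      exact isTrace_of_untaus hu' (.visStep e x (ih _ this))

end ITree

/-- Equivalence up to `Tau` implies trace refinement: if
`t ≡ u` then every trace of `t`, with its optional result, is a trace of `u`. -/
theorem eutt_implies_refines (E : Type → Type) (R : Type) (t u : ITree E R)
    (h : ITree.Eutt t u) : ITree.Refines t u :=
  fun tr r? htr => ITree.key_isTrace htr u h
end
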